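/- Let H be a complex Hilbert space with dim H ≥ 2 and let T be a nonzero bounded linear operator on H. Then m(T) = √((1 − ε̂(T))/(1 + ε̂(T))) · ‖T‖. -/

import Mathlib

open scoped ComplexInnerProductSpace

noncomputable section
set_option linter.unusedSectionVars false
set_option maxHeartbeats 1000000

variable {H : Type*} [NormedAddCommGroup H] [InnerProductSpace ℂ H] [CompleteSpace H]

/-- `T` is `ε`-approximately orthogonality preserving: orthogonal vectors are mapped to
`ε`-orthogonal vectors. -/
def IsAOP (T : H →L[ℂ] H) (ε : ℝ) : Prop :=
  ∀ x y : H, ⟪x, y⟫ = 0 → ‖⟪T x, T y⟫‖ ≤ ε * (‖T x‖ * ‖T y‖)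

/-- `ε̂(T)`, the smallest `ε ∈ [0,1]` for which `T` is `ε`-AOP. -/
def epsHat (T : H →L[ℂ] H) : ℝ :=
  sInf {ε : ℝ | 0 ≤ ε ∧ ε ≤ 1 ∧ IsAOP T ε}

/-- The minimum modulus `m(T) = inf {‖T x‖ : ‖x‖ = 1}`. -/
def minMod (T : H →L[ℂ] H) : ℝ :=
  sInf {r : ℝ | ∃ x : H, ‖x‖ = 1 ∧ ‖T x‖ = r}

/-- The set `ℂ𝒱` of scalar multiples of linear isometries of `H`. -/
def scalarIsoms (H : Type*) [NormedAddCommGroup H] [InnerProductSpace ℂ H] :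
    Set (H →L[ℂ] H) :=
  {S | ∃ (c : ℂ) (V : H →L[ℂ] H), (∀ x : H, ‖V x‖ = ‖x‖) ∧ S = c • V}

/-- `dist(T, ℂ𝒱)`. -/
def distCV (T : H →L[ℂ] H) : ℝ := Metric.infDist T (scalarIsoms H)

/-- The set `𝒱` of linear isometries of `H`. -/
def isoms (H : Type*) [NormedAddCommGroup H] [InnerProductSpace ℂ H] :
    Set (H →L[ℂ] H) :=
  {V | ∀ x : H, ‖V x‖ = ‖x‖}

/-- `dist(T, 𝒱)`. -/
def distV (T : H →L[ℂ] H) : ℝ := Metric.infDist T (isoms H)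

section AuxAOP

lemma inner_T_comb (T : H →L[ℂ] H) (x y : H) (a b a' b' : ℂ) :
    ⟪T (a • x + b • y), T (a' • x + b' • y)⟫ =
      (starRingEnd ℂ) a * a' * ⟪T x, T x⟫ + (starRingEnd ℂ) a * b' * ⟪T x, T y⟫
      + (starRingEnd ℂ) b * a' * ⟪T y, T x⟫ + (starRingEnd ℂ) b * b' * ⟪T y, T y⟫ := by
  simp only [map_add, map_smul, inner_add_left, inner_add_right, inner_smul_left,
    inner_smul_right]
  ring

lemma inner_comb (x y : H) (hx : ‖x‖ = 1) (hy : ‖y‖ = 1) (hxy : ⟪x, y⟫ = 0)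
    (a b a' b' : ℂ) :
    ⟪a • x + b • y, a' • x + b' • y⟫ = (starRingEnd ℂ) a * a' + (starRingEnd ℂ) b * b' := by
  have hyx : ⟪y, x⟫ = 0 := by rw [← inner_conj_symm, hxy]; simp
  have hxx : ⟪x, x⟫ = 1 := by
    rw [inner_self_eq_norm_sq_to_K (𝕜 := ℂ), hx]; norm_num
  have hyy : ⟪y, y⟫ = 1 := by
    rw [inner_self_eq_norm_sq_to_K (𝕜 := ℂ), hy]; norm_num
  simp only [inner_add_left, inner_add_right, inner_smul_left, inner_smul_right,
    hxx, hyy, hxy, hyx]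
  ring

lemma normT_comb_sq (T : H →L[ℂ] H) (x y : H) (a b : ℂ) :
    ‖T (a • x + b • y)‖ ^ 2 = ‖a‖ ^ 2 * ‖T x‖ ^ 2 + ‖b‖ ^ 2 * ‖T y‖ ^ 2
      + 2 * Complex.re ((starRingEnd ℂ) a * b * ⟪T x, T y⟫) := by
  have h := inner_T_comb T x y a b a b
  have h1 : ⟪T x, T x⟫ = ((‖T x‖ : ℂ)) ^ 2 := inner_self_eq_norm_sq_to_K (T x)
  have h2 : ⟪T y, T y⟫ = ((‖T y‖ : ℂ)) ^ 2 := inner_self_eq_norm_sq_to_K (T y)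
  have h3 : ⟪T y, T x⟫ = (starRingEnd ℂ) ⟪T x, T y⟫ := (inner_conj_symm _ _).symm
  have ha : (starRingEnd ℂ) a * a = ((‖a‖ : ℂ)) ^ 2 := by rw [mul_comm, Complex.mul_conj']
  have hb : (starRingEnd ℂ) b * b = ((‖b‖ : ℂ)) ^ 2 := by rw [mul_comm, Complex.mul_conj']
  set c := ⟪T x, T y⟫ with hc
  have hw : (starRingEnd ℂ) b * a * (starRingEnd ℂ) c
      = (starRingEnd ℂ) ((starRingEnd ℂ) a * b * c) := by
    simp only [map_mul, RingHomCompTriple.comp_apply, RingHom.id_apply, Complex.conj_conj]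
    ring
  have hadd : (starRingEnd ℂ) a * b * c + (starRingEnd ℂ) ((starRingEnd ℂ) a * b * c)
      = 2 * (((starRingEnd ℂ) a * b * c).re : ℂ) := by
    rw [Complex.add_conj]; push_cast; ring
  have key : ⟪T (a • x + b • y), T (a • x + b • y)⟫
      = ((‖a‖ ^ 2 * ‖T x‖ ^ 2 + ‖b‖ ^ 2 * ‖T y‖ ^ 2
          + 2 * ((starRingEnd ℂ) a * b * c).re : ℝ) : ℂ) := by
    rw [h, h1, h2, h3]
    push_cast
    linear_combination ((‖T x‖ : ℂ))^2 * ha + ((‖T y‖:ℂ))^2 * hb + hadd + hw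
  have h4 := inner_self_eq_norm_sq (𝕜 := ℂ) (T (a • x + b • y))
  rw [key] at h4
  rw [← h4]; exact RCLike.ofReal_re _


lemma minModSet_nonempty (T : H →L[ℂ] H) (hT : T ≠ 0) :
    {r : ℝ | ∃ x : H, ‖x‖ = 1 ∧ ‖T x‖ = r}.Nonempty := by
  obtain ⟨x, hx⟩ : ∃ x : H, T x ≠ 0 := by
    by_contra h
    push_neg at h
    exact hT (ContinuousLinearMap.ext fun x => by simp [h])
  have hx0 : x ≠ 0 := fun h => hx (by simp [h])
  refine ⟨‖T ((‖x‖⁻¹ : ℂ) • x)‖, (‖x‖⁻¹ : ℂ) • x, ?_, rfl⟩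
  rw [norm_smul]
  simp [norm_inv, inv_mul_cancel₀ (norm_ne_zero_iff.mpr hx0)]

lemma minMod_bddBelow (T : H →L[ℂ] H) :
    BddBelow {r : ℝ | ∃ x : H, ‖x‖ = 1 ∧ ‖T x‖ = r} :=
  ⟨0, fun r ⟨x, _, hr⟩ => hr ▸ norm_nonneg _⟩

lemma minMod_le (T : H →L[ℂ] H) {x : H} (hx : ‖x‖ = 1) : minMod T ≤ ‖T x‖ :=
  csInf_le (minMod_bddBelow T) ⟨x, hx, rfl⟩

lemma minMod_nonneg (T : H →L[ℂ] H) (hT : T ≠ 0) : 0 ≤ minMod T :=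
  le_csInf (minModSet_nonempty T hT) fun r ⟨x, _, hr⟩ => hr ▸ norm_nonneg _

lemma le_minMod (T : H →L[ℂ] H) (hT : T ≠ 0) {b : ℝ}
    (hb : ∀ x : H, ‖x‖ = 1 → b ≤ ‖T x‖) : b ≤ minMod T :=
  le_csInf (minModSet_nonempty T hT) fun r ⟨x, hx, hr⟩ => hr ▸ hb x hx

lemma norm_T_le_unit (T : H →L[ℂ] H) {x : H} (hx : ‖x‖ = 1) : ‖T x‖ ≤ ‖T‖ := by
  simpa [hx] using T.le_opNorm x

lemma minMod_le_opNorm (T : H →L[ℂ] H) (hT : T ≠ 0) : minMod T ≤ ‖T‖ := by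
  obtain ⟨r, x, hx, hr⟩ := minModSet_nonempty T hT
  exact le_trans (minMod_le T hx) (norm_T_le_unit T hx)

lemma aop_unit (T : H →L[ℂ] H) (hT : T ≠ 0) {x y : H}
    (hx : ‖x‖ = 1) (hy : ‖y‖ = 1) (hxy : ⟪x, y⟫ = 0) :
    ‖⟪T x, T y⟫‖ ≤ (‖T‖ ^ 2 - minMod T ^ 2) / (‖T‖ ^ 2 + minMod T ^ 2)
      * (‖T x‖ * ‖T y‖) := by
  set M := ‖T‖ with hM
  set m := minMod T with hm
  have hM0 : 0 < M := by
    rw [hM]; exact norm_pos_iff.mpr hT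
  have hm0 : 0 ≤ m := minMod_nonneg T hT
  have hmM : m ≤ M := minMod_le_opNorm T hT
  have hden : (0:ℝ) < M ^ 2 + m ^ 2 := by positivity
  have hε0 : 0 ≤ (M ^ 2 - m ^ 2) / (M ^ 2 + m ^ 2) := by
    apply div_nonneg _ hden.le; nlinarith
  set c := ⟪T x, T y⟫ with hc
  set r := ‖c‖ with hr
  rcases eq_or_lt_of_le (norm_nonneg c) with h0 | hrpos0
  · rw [hr, ← h0]
    exact mul_nonneg hε0 (mul_nonneg (norm_nonneg _) (norm_nonneg _))
  have hrpos : 0 < r := by rw [hr]; exact hrpos0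
  set p := ‖T x‖ ^ 2 with hp
  set q := ‖T y‖ ^ 2 with hq
  have hp0 : 0 ≤ p := sq_nonneg _
  have hq0 : 0 ≤ q := sq_nonneg _
  set D := Real.sqrt ((p - q) ^ 2 + 4 * r ^ 2) with hD
  have hD2 : D ^ 2 = (p - q) ^ 2 + 4 * r ^ 2 := Real.sq_sqrt (by positivity)
  have hD0 : 0 ≤ D := Real.sqrt_nonneg _
  have hDr : 2 * r ≤ D := by nlinarith [sq_nonneg (p - q), sq_nonneg (D - 2*r)]
  have hDpos : 0 < D := by linarith
  have hDpq : |p - q| ≤ D := by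
    rw [abs_le]; constructor <;> nlinarith [sq_nonneg (D + (p-q)), sq_nonneg (D - (p-q))]
  have hA1 : 0 ≤ (D - (p - q)) / (2 * D) := by
    apply div_nonneg _ (by linarith)
    have := (abs_le.mp hDpq).2; linarith
  have hA2 : 0 ≤ (D + (p - q)) / (2 * D) := by
    apply div_nonneg _ (by linarith)
    have := (abs_le.mp hDpq).1; linarith
  set s := Real.sqrt ((D - (p - q)) / (2 * D)) with hs
  set t := Real.sqrt ((D + (p - q)) / (2 * D)) with ht
  have hs0 : 0 ≤ s := Real.sqrt_nonneg _
  have ht0 : 0 ≤ t := Real.sqrt_nonneg _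
  have hs2 : s ^ 2 = (D - (p - q)) / (2 * D) := Real.sq_sqrt hA1
  have ht2 : t ^ 2 = (D + (p - q)) / (2 * D) := Real.sq_sqrt hA2
  have hst1 : s ^ 2 + t ^ 2 = 1 := by
    rw [hs2, ht2]; field_simp; ring
  have hstr : s * t = r / D := by
    rw [hs, ht, ← Real.sqrt_mul hA1]
    have h1 : (D - (p - q)) * (D + (p - q)) = 4 * r ^ 2 := by linear_combination hD2
    have : (D - (p - q)) / (2 * D) * ((D + (p - q)) / (2 * D)) = (r / D) ^ 2 := by
      rw [div_mul_div_comm, h1, div_pow, show (2*D)*(2*D) = 4*D^2 by ring,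
        mul_div_mul_left _ _ (by norm_num : (4:ℝ) ≠ 0)]
    rw [this, Real.sqrt_sq (by positivity)]
  -- the phase
  set lam := (starRingEnd ℂ) c / (r : ℂ) with hlam
  have hcc : (starRingEnd ℂ) c * c = ((r ^ 2 : ℝ) : ℂ) := by
    rw [mul_comm, Complex.mul_conj']; push_cast; ring
  have hlamc : lam * c = (r : ℂ) := by
    rw [hlam, div_mul_eq_mul_div, hcc]
    have h1 : ((r ^ 2 : ℝ) : ℂ) = (r : ℂ) * (r : ℂ) := by push_cast; ring
    have h2 : (r : ℂ) ≠ 0 := by exact_mod_cast hrpos.ne'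
    rw [h1, mul_div_assoc, div_self h2, mul_one]
  have hlamnorm : ‖lam‖ = 1 := by
    rw [hlam, norm_div, RCLike.norm_conj]
    simp only [Complex.norm_real, Real.norm_eq_abs, abs_of_pos hrpos]
    rw [← hr]
    exact div_self hrpos.ne'
  -- norms of combinations
  have hnormz : ∀ u v : ℝ, u ^ 2 + v ^ 2 = 1 → ‖(u : ℂ) • x + ((v : ℂ) * lam) • y‖ = 1 := by
    intro u v huv
    have h1 := inner_comb x y hx hy hxy (u : ℂ) ((v : ℂ) * lam) (u : ℂ) ((v : ℂ) * lam)
    have h2 : (starRingEnd ℂ) (u : ℂ) * (u : ℂ) + (starRingEnd ℂ) ((v : ℂ) * lam) * ((v : ℂ) * lam)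
        = ((u ^ 2 + v ^ 2 : ℝ) : ℂ) := by
      rw [map_mul, Complex.conj_ofReal, Complex.conj_ofReal]
      have hl : (starRingEnd ℂ) lam * lam = 1 := by
        rw [mul_comm, Complex.mul_conj', hlamnorm]; norm_num
      push_cast
      linear_combination ((v:ℂ))^2 * hl
    rw [h2, huv] at h1
    have h3 := inner_self_eq_norm_sq (𝕜 := ℂ) ((u : ℂ) • x + ((v : ℂ) * lam) • y)
    rw [h1] at h3
    simp only [Complex.ofReal_one] at h3
    have h4 : ‖(u : ℂ) • x + ((v : ℂ) * lam) • y‖ ^ 2 = 1 := by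
      simpa using h3.symm
    have h5 : (‖(u : ℂ) • x + ((v : ℂ) * lam) • y‖ - 1)
        * (‖(u : ℂ) • x + ((v : ℂ) * lam) • y‖ + 1) = 0 := by linear_combination h4
    rcases mul_eq_zero.mp h5 with h6 | h6
    · linarith
    · linarith [norm_nonneg ((u : ℂ) • x + ((v : ℂ) * lam) • y)]
  have hnormTz : ∀ u v : ℝ, ‖T ((u : ℂ) • x + ((v : ℂ) * lam) • y)‖ ^ 2
      = u ^ 2 * p + v ^ 2 * q + 2 * (u * v * r) := by
    intro u v
    rw [normT_comb_sq]
    have e1 : ‖(u : ℂ)‖ ^ 2 = u ^ 2 := by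
      rw [Complex.norm_real]; exact sq_abs u
    have e2 : ‖(v : ℂ) * lam‖ ^ 2 = v ^ 2 := by
      rw [norm_mul, hlamnorm, Complex.norm_real, mul_one]; exact sq_abs v
    have e3 : (starRingEnd ℂ) (u : ℂ) * ((v : ℂ) * lam) * c = ((u * v * r : ℝ) : ℂ) := by
      rw [Complex.conj_ofReal]
      push_cast
      linear_combination ((u : ℂ) * (v : ℂ)) * hlamc
    rw [e1, e2, e3, ← hp, ← hq]
    simp [Complex.ofReal_re]
  -- the two test vectors
  have hz1 : m ^ 2 ≤ s ^ 2 * p + t ^ 2 * q + 2 * (s * (-t) * r) := by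
    have hu := hnormz s (-t) (by ring_nf; ring_nf at hst1; linarith [hst1])
    have h5 : m ≤ ‖T ((s : ℂ) • x + (((-t : ℝ) : ℂ) * lam) • y)‖ := minMod_le T hu
    have h6 := hnormTz s (-t)
    have h7 := pow_le_pow_left₀ hm0 h5 2
    rw [h6] at h7
    linarith [h7]
  have hz2 : t ^ 2 * p + s ^ 2 * q + 2 * (t * s * r) ≤ M ^ 2 := by
    have hu := hnormz t s (by linarith [hst1])
    have h5 : ‖T ((t : ℂ) • x + ((s : ℝ) * lam) • y)‖ ≤ M := norm_T_le_unit T hu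
    have h6 := hnormTz t s
    have h7 := pow_le_pow_left₀ (norm_nonneg (T ((t : ℂ) • x + ((s : ℝ) * lam) • y))) h5 2
    rw [h6] at h7
    linarith [h7]
  -- identify the quadratic values
  set A := s ^ 2 * p + t ^ 2 * q - 2 * (s * t * r) with hAdef
  set B := t ^ 2 * p + s ^ 2 * q + 2 * (s * t * r) with hBdef
  have hmA : m ^ 2 ≤ A := by rw [hAdef]; linarith [hz1]
  have hBM : B ≤ M ^ 2 := by rw [hBdef]; linarith [hz2]
  have hAB1 : A + B = p + q := by
    rw [hAdef, hBdef]; linear_combination (p + q) * hst1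
  have hs2' : 2 * D * s ^ 2 = D - (p - q) := by
    rw [hs2]; field_simp
  have ht2' : 2 * D * t ^ 2 = D + (p - q) := by
    rw [ht2]; field_simp
  have hstr' : D * (s * t) = r := by
    rw [hstr]; field_simp
  have hAB2 : B - A = D := by
    have key : 2 * D * (B - A) = 2 * D ^ 2 := by
      rw [hAdef, hBdef]
      linear_combination (p - q) * ht2' - (p - q) * hs2' + 8 * r * hstr' - 2 * hD2
    exact mul_left_cancel₀ (by positivity : (2 * D : ℝ) ≠ 0) (key.trans (by ring))
  have hABprod : A * B = p * q - r ^ 2 := by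
    linear_combination ((A + B + p + q) / 4) * hAB1 - ((B - A + D) / 4) * hAB2 - (1 / 4) * hD2
  have hA0 : 0 ≤ A := le_trans (by positivity) hmA
  have hAleB : A ≤ B := by linarith [hAB2, hD0]
  have hB0 : 0 ≤ B := le_trans hA0 hAleB
  -- the key numeric inequality
  have e1 : 0 ≤ M ^ 2 * B - m ^ 2 * A := by
    have i1 : m ^ 2 * A ≤ m ^ 2 * B := mul_le_mul_of_nonneg_left hAleB (sq_nonneg m)
    have i2 : m ^ 2 * B ≤ M ^ 2 * B :=
      mul_le_mul_of_nonneg_right (pow_le_pow_left₀ hm0 hmM 2) hB0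
    linarith
  have e2 : 0 ≤ M ^ 2 * A - m ^ 2 * B := by
    have i1 : m ^ 2 * B ≤ A * B := mul_le_mul_of_nonneg_right hmA hB0
    have i2 : A * B ≤ A * M ^ 2 := mul_le_mul_of_nonneg_left hBM hA0
    linarith [i1, i2]
  have key2 : M ^ 2 * m ^ 2 * (A + B) ^ 2 ≤ (M ^ 2 + m ^ 2) ^ 2 * (A * B) := by
    linarith [mul_nonneg e1 e2, sq_nonneg (A + B), sq_nonneg (A - B)]
  rw [hAB1, hABprod] at key2
  have key3 : r ^ 2 * (M ^ 2 + m ^ 2) ^ 2 ≤ (M ^ 2 - m ^ 2) ^ 2 * (p * q) := by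
    linarith [key2, mul_nonneg (mul_nonneg (sq_nonneg M) (sq_nonneg m)) (sq_nonneg (p - q))]
  -- conclude
  have hPQ : (‖T x‖ * ‖T y‖) ^ 2 = p * q := by rw [hp, hq]; ring
  have hrhs0 : 0 ≤ (M ^ 2 - m ^ 2) / (M ^ 2 + m ^ 2) * (‖T x‖ * ‖T y‖) :=
    mul_nonneg hε0 (mul_nonneg (norm_nonneg _) (norm_nonneg _))
  have hsq : r ^ 2 ≤ ((M ^ 2 - m ^ 2) / (M ^ 2 + m ^ 2) * (‖T x‖ * ‖T y‖)) ^ 2 := by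
    rw [mul_pow, hPQ, div_pow]
    rw [div_mul_eq_mul_div, le_div_iff₀ (by positivity)]
    linarith [key3]
  calc r = Real.sqrt (r ^ 2) := (Real.sqrt_sq hrpos.le).symm
    _ ≤ Real.sqrt (((M ^ 2 - m ^ 2) / (M ^ 2 + m ^ 2) * (‖T x‖ * ‖T y‖)) ^ 2) :=
        Real.sqrt_le_sqrt hsq
    _ = (M ^ 2 - m ^ 2) / (M ^ 2 + m ^ 2) * (‖T x‖ * ‖T y‖) := Real.sqrt_sq hrhs0

lemma aop_pair (T : H →L[ℂ] H) {ε : ℝ} (hε : 0 ≤ ε) (hA : IsAOP T ε)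
    {e₁ e₂ : H} (h1 : ‖e₁‖ = 1) (h2 : ‖e₂‖ = 1) (h12 : ⟪e₁, e₂⟫ = 0)
    (hpq : ‖T e₁‖ ≤ ‖T e₂‖) :
    Real.sqrt ((‖T e₁‖ ^ 2 - ‖T e₂‖ ^ 2) ^ 2 + 4 * ‖⟪T e₁, T e₂⟫‖ ^ 2)
      ≤ ε * (‖T e₁‖ ^ 2 + ‖T e₂‖ ^ 2) := by
  set p := ‖T e₁‖ ^ 2 with hp
  set q := ‖T e₂‖ ^ 2 with hq
  set c := ⟪T e₁, T e₂⟫ with hc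
  set r := ‖c‖ with hrdef
  set D := Real.sqrt ((p - q) ^ 2 + 4 * r ^ 2) with hD
  have hp0 : 0 ≤ p := sq_nonneg _
  have hq0 : 0 ≤ q := sq_nonneg _
  have hr0 : 0 ≤ r := norm_nonneg _
  have hpq2 : p ≤ q := pow_le_pow_left₀ (norm_nonneg _) hpq 2
  have hD2 : D ^ 2 = (p - q) ^ 2 + 4 * r ^ 2 := Real.sq_sqrt (by positivity)
  have hD0 : 0 ≤ D := Real.sqrt_nonneg _
  rcases eq_or_lt_of_le hD0 with hD0' | hDpos
  · rw [← hD0']; exact mul_nonneg hε (by positivity)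
  set k := (q - p + D) / 2 with hk
  have hk0 : 0 < k := by rw [hk]; linarith
  have hkk : k ^ 2 - r ^ 2 = k * (q - p) := by
    rw [hk]; linear_combination (1 / 4) * hD2
  have hDk : D = 2 * k - (q - p) := by rw [hk]; ring
  have hccC : (starRingEnd ℂ) c * c = ((r : ℝ) : ℂ) ^ 2 := by
    rw [mul_comm, Complex.mul_conj']
  have hkkC : ((k : ℝ) : ℂ) ^ 2 - ((r : ℝ) : ℂ) ^ 2 = ((k : ℝ) : ℂ) * (((q : ℝ) : ℂ) - ((p : ℝ) : ℂ)) := by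
    have h := congrArg (Complex.ofReal) hkk
    push_cast at h
    exact h
  have hDkC : ((D : ℝ) : ℂ) = 2 * ((k : ℝ) : ℂ) - (((q : ℝ) : ℂ) - ((p : ℝ) : ℂ)) := by
    have h := congrArg (Complex.ofReal) hDk
    push_cast at h
    exact h
  have hpC : ((p : ℝ) : ℂ) = ((‖T e₁‖ : ℝ) : ℂ) ^ 2 := by rw [hp]; push_cast; ring
  have hqC : ((q : ℝ) : ℂ) = ((‖T e₂‖ : ℝ) : ℂ) ^ 2 := by rw [hq]; push_cast; ring
  have hIxx : ⟪T e₁, T e₁⟫ = ((p : ℝ) : ℂ) := by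
    rw [hpC]; exact inner_self_eq_norm_sq_to_K (T e₁)
  have hIyy : ⟪T e₂, T e₂⟫ = ((q : ℝ) : ℂ) := by
    rw [hqC]; exact inner_self_eq_norm_sq_to_K (T e₂)
  have hIyx : ⟪T e₂, T e₁⟫ = (starRingEnd ℂ) c := (inner_conj_symm _ _).symm
  set u := (c + ((k : ℝ) : ℂ)) • e₁ + (((k : ℝ) : ℂ) - (starRingEnd ℂ) c) • e₂ with hu
  set v := (c - ((k : ℝ) : ℂ)) • e₁ + (((k : ℝ) : ℂ) + (starRingEnd ℂ) c) • e₂ with hv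
  have huv : ⟪u, v⟫ = 0 := by
    rw [hu, hv, inner_comb e₁ e₂ h1 h2 h12]
    simp only [map_add, map_sub, Complex.conj_conj, Complex.conj_ofReal]
    ring
  have hTuv : ⟪T u, T v⟫ = ((D * (r ^ 2 + k ^ 2) : ℝ) : ℂ) := by
    rw [hu, hv, inner_T_comb, hIxx, hIyy, hIyx]
    simp only [map_add, map_sub, Complex.conj_conj, Complex.conj_ofReal]
    push_cast
    linear_combination (((p : ℝ) : ℂ) - ((q : ℝ) : ℂ) + 4 * ((k : ℝ) : ℂ)
        + (starRingEnd ℂ) c - c) * hccC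
      + (-2 * ((k : ℝ) : ℂ) + c - (starRingEnd ℂ) c) * hkkC
      - (((r : ℝ) : ℂ) ^ 2 + ((k : ℝ) : ℂ) ^ 2) * hDkC
  have hTuu : ⟪T u, T u⟫ = (((p + q) * (r ^ 2 + k ^ 2) : ℝ) : ℂ) := by
    rw [hu, inner_T_comb, hIxx, hIyy, hIyx]
    simp only [map_add, map_sub, Complex.conj_conj, Complex.conj_ofReal]
    push_cast
    linear_combination (((p : ℝ) : ℂ) + ((q : ℝ) : ℂ) - c - (starRingEnd ℂ) c) * hccC
      + (c + (starRingEnd ℂ) c) * hkkC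
  have hTvv : ⟪T v, T v⟫ = (((p + q) * (r ^ 2 + k ^ 2) : ℝ) : ℂ) := by
    rw [hv, inner_T_comb, hIxx, hIyy, hIyx]
    simp only [map_add, map_sub, Complex.conj_conj, Complex.conj_ofReal]
    push_cast
    linear_combination (((p : ℝ) : ℂ) + ((q : ℝ) : ℂ) + c + (starRingEnd ℂ) c) * hccC
      - (c + (starRingEnd ℂ) c) * hkkC
  have hNu : ‖T u‖ ^ 2 = (p + q) * (r ^ 2 + k ^ 2) := by
    have h4 := inner_self_eq_norm_sq (𝕜 := ℂ) (T u)
    rw [hTuu] at h4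
    rw [← h4]; exact RCLike.ofReal_re _
  have hNv : ‖T v‖ ^ 2 = (p + q) * (r ^ 2 + k ^ 2) := by
    have h4 := inner_self_eq_norm_sq (𝕜 := ℂ) (T v)
    rw [hTvv] at h4
    rw [← h4]; exact RCLike.ofReal_re _
  have happ := hA u v huv
  rw [hTuv] at happ
  have hnorm : ‖((D * (r ^ 2 + k ^ 2) : ℝ) : ℂ)‖ = D * (r ^ 2 + k ^ 2) := by
    rw [Complex.norm_real]
    exact abs_of_nonneg (by positivity)
  rw [hnorm] at happ
  have hTu' : ‖T u‖ = Real.sqrt ((p + q) * (r ^ 2 + k ^ 2)) := by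
    rw [← hNu, Real.sqrt_sq (norm_nonneg _)]
  have hTv' : ‖T v‖ = Real.sqrt ((p + q) * (r ^ 2 + k ^ 2)) := by
    rw [← hNv, Real.sqrt_sq (norm_nonneg _)]
  rw [hTu', hTv', Real.mul_self_sqrt (by positivity)] at happ
  have hrk : (0:ℝ) < r ^ 2 + k ^ 2 := by positivity
  exact le_of_mul_le_mul_right (by linarith [happ]) hrk

lemma aop_pair' (T : H →L[ℂ] H) {ε : ℝ} (hε : 0 ≤ ε) (hA : IsAOP T ε)
    {e₁ e₂ : H} (h1 : ‖e₁‖ = 1) (h2 : ‖e₂‖ = 1) (h12 : ⟪e₁, e₂⟫ = 0) :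
    Real.sqrt ((‖T e₁‖ ^ 2 - ‖T e₂‖ ^ 2) ^ 2 + 4 * ‖⟪T e₁, T e₂⟫‖ ^ 2)
      ≤ ε * (‖T e₁‖ ^ 2 + ‖T e₂‖ ^ 2) := by
  rcases le_total ‖T e₁‖ ‖T e₂‖ with h | h
  · exact aop_pair T hε hA h1 h2 h12 h
  · have h21 : ⟪e₂, e₁⟫ = 0 := by rw [← inner_conj_symm, h12]; simp
    have := aop_pair T hε hA h2 h1 h21 h
    have hswap : ‖⟪T e₂, T e₁⟫‖ = ‖⟪T e₁, T e₂⟫‖ := by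
      rw [← inner_conj_symm]; exact RCLike.norm_conj _
    rw [hswap] at this
    calc Real.sqrt ((‖T e₁‖ ^ 2 - ‖T e₂‖ ^ 2) ^ 2 + 4 * ‖⟪T e₁, T e₂⟫‖ ^ 2)
        = Real.sqrt ((‖T e₂‖ ^ 2 - ‖T e₁‖ ^ 2) ^ 2 + 4 * ‖⟪T e₁, T e₂⟫‖ ^ 2) := by
          congr 1; ring
      _ ≤ ε * (‖T e₂‖ ^ 2 + ‖T e₁‖ ^ 2) := this
      _ = ε * (‖T e₁‖ ^ 2 + ‖T e₂‖ ^ 2) := by ring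

lemma pointwise_bound (T : H →L[ℂ] H) {ε : ℝ} (hε0 : 0 ≤ ε) (hε1 : ε ≤ 1)
    (hA : IsAOP T ε) {z w : H} (hz : ‖z‖ = 1) (hw : ‖w‖ = 1) :
    (1 - ε) * ‖T z‖ ^ 2 ≤ (1 + ε) * ‖T w‖ ^ 2 := by
  have hzz : ⟪z, z⟫ = 1 := by
    rw [inner_self_eq_norm_sq_to_K (𝕜 := ℂ), hz]; norm_num
  set γ := ⟪z, w⟫ with hγ
  set d := w - γ • z with hd
  have hzd : ⟪z, d⟫ = 0 := by
    rw [hd, inner_sub_right, inner_smul_right, hzz, mul_one, ← hγ, sub_self]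
  by_cases hd0 : d = 0
  · have hwγ : w = γ • z := by
      have : w - γ • z = 0 := hd0
      rw [sub_eq_zero] at this; exact this
    have hγ1 : ‖γ‖ = 1 := by
      have := hw
      rw [hwγ, norm_smul, hz, mul_one] at this
      exact this
    have hTw : ‖T w‖ = ‖T z‖ := by
      rw [hwγ, map_smul, norm_smul, hγ1, one_mul]
    rw [hTw]
    nlinarith [mul_nonneg hε0 (sq_nonneg ‖T z‖)]
  · set σ := ‖d‖ with hσ
    have hσ0 : 0 < σ := norm_pos_iff.mpr hd0
    set e₂ := ((σ⁻¹ : ℝ) : ℂ) • d with he₂def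
    have he₂ : ‖e₂‖ = 1 := by
      rw [he₂def, norm_smul, Complex.norm_real, Real.norm_eq_abs,
        abs_of_pos (inv_pos.mpr hσ0), ← hσ, inv_mul_cancel₀ hσ0.ne']
    have hze₂ : ⟪z, e₂⟫ = 0 := by
      rw [he₂def, inner_smul_right, hzd, mul_zero]
    have hw' : w = γ • z + ((σ : ℝ) : ℂ) • e₂ := by
      rw [he₂def, smul_smul]
      have : ((σ : ℝ) : ℂ) * ((σ⁻¹ : ℝ) : ℂ) = 1 := by
        rw [← Complex.ofReal_mul, mul_inv_cancel₀ hσ0.ne', Complex.ofReal_one]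
      rw [this, one_smul, hd]
      abel
    -- Pythagoras for w
    have hγσ : ‖γ‖ ^ 2 + σ ^ 2 = 1 := by
      have h1 : ⟪w, w⟫ = ((‖γ‖ ^ 2 + σ ^ 2 : ℝ) : ℂ) := by
        conv_lhs => rw [hw']
        rw [inner_comb z e₂ hz he₂ hze₂]
        rw [Complex.conj_ofReal]
        have : (starRingEnd ℂ) γ * γ = ((‖γ‖ : ℝ) : ℂ) ^ 2 := by
          rw [mul_comm, Complex.mul_conj']
        rw [this]
        push_cast
        ring
      have h2 := inner_self_eq_norm_sq (𝕜 := ℂ) w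
      rw [h1] at h2
      have h3 : ‖γ‖ ^ 2 + σ ^ 2 = ‖w‖ ^ 2 := by
        rw [← h2]; exact (RCLike.ofReal_re _).symm
      rw [h3, hw]; norm_num
    set p := ‖T z‖ ^ 2 with hp
    set q := ‖T e₂‖ ^ 2 with hq
    set c₂ := ⟪T z, T e₂⟫ with hc₂
    set r := ‖c₂‖ with hr
    set D := Real.sqrt ((p - q) ^ 2 + 4 * r ^ 2) with hD
    have hF2 : D ≤ ε * (p + q) := aop_pair' T hε0 hA hz he₂ hze₂
    have hp0 : 0 ≤ p := sq_nonneg _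
    have hq0 : 0 ≤ q := sq_nonneg _
    have hr0 : 0 ≤ r := norm_nonneg _
    have hD2 : D ^ 2 = (p - q) ^ 2 + 4 * r ^ 2 := Real.sq_sqrt (by positivity)
    have hD0 : 0 ≤ D := Real.sqrt_nonneg _
    have hDpq : |p - q| ≤ D := by
      rw [abs_le]
      constructor <;> nlinarith [sq_nonneg (D + (p - q)), sq_nonneg (D - (p - q))]
    have hDge : p - q ≤ D := (abs_le.mp hDpq).2
    have hDge' : q - p ≤ D := by have := (abs_le.mp hDpq).1; linarith
    set α := (p + q - D) / 2 with hα
    have hpα : 0 ≤ p - α := by rw [hα]; linarith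
    have hqα : 0 ≤ q - α := by rw [hα]; linarith
    have hprod : (p - α) * (q - α) = r ^ 2 := by
      rw [hα]; linear_combination (1 / 4) * hD2
    -- lower bound for ‖T w‖²
    set g := ‖γ‖ with hg
    have hg0 : 0 ≤ g := norm_nonneg _
    have hQw : ‖T w‖ ^ 2 = g ^ 2 * p + σ ^ 2 * q
        + 2 * Complex.re ((starRingEnd ℂ) γ * ((σ : ℝ) : ℂ) * c₂) := by
      conv_lhs => rw [hw']
      rw [normT_comb_sq]
      have hσn : ‖((σ : ℝ) : ℂ)‖ ^ 2 = σ ^ 2 := by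
        rw [Complex.norm_real, Real.norm_eq_abs, abs_of_pos hσ0]
      rw [hσn, ← hp, ← hq, ← hc₂, ← hg]
    have hre : -(g * σ * r) ≤ Complex.re ((starRingEnd ℂ) γ * ((σ : ℝ) : ℂ) * c₂) := by
      have h1 : ‖(starRingEnd ℂ) γ * ((σ : ℝ) : ℂ) * c₂‖ = g * σ * r := by
        rw [norm_mul, norm_mul, RCLike.norm_conj, Complex.norm_real,
          Real.norm_eq_abs, abs_of_pos hσ0, ← hg, ← hr]
      have h2 := Complex.abs_re_le_norm ((starRingEnd ℂ) γ * ((σ : ℝ) : ℂ) * c₂)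
      have h3 := neg_abs_le ((starRingEnd ℂ) γ * ((σ : ℝ) : ℂ) * c₂).re
      rw [h1] at h2
      have h4 := abs_le.mp h2
      linarith [h3, h4.1, h4.2, abs_nonneg ((starRingEnd ℂ) γ * ((σ : ℝ) : ℂ) * c₂).re]
    set X := g ^ 2 * (p - α) + σ ^ 2 * (q - α) with hX
    have hX0 : 0 ≤ X := by
      rw [hX]
      exact add_nonneg (mul_nonneg (sq_nonneg _) hpα) (mul_nonneg (sq_nonneg _) hqα)
    have e0 : X ^ 2 - (2 * (g * σ * r)) ^ 2 = (g ^ 2 * (p - α) - σ ^ 2 * (q - α)) ^ 2 := by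
      rw [hX]; linear_combination (4 * (g * σ) ^ 2) * hprod
    have hXsq : (2 * (g * σ * r)) ^ 2 ≤ X ^ 2 :=
      by linarith [sq_nonneg (g ^ 2 * (p - α) - σ ^ 2 * (q - α)), e0]
    have h2gsr : 2 * (g * σ * r) ≤ X := by
      calc 2 * (g * σ * r) = Real.sqrt ((2 * (g * σ * r)) ^ 2) :=
            (Real.sqrt_sq (by positivity)).symm
        _ ≤ Real.sqrt (X ^ 2) := Real.sqrt_le_sqrt hXsq
        _ = X := Real.sqrt_sq hX0
    have hαQ : α ≤ ‖T w‖ ^ 2 := by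
      have h3 : α * (g ^ 2 + σ ^ 2) ≤ g ^ 2 * p + σ ^ 2 * q - 2 * (g * σ * r) := by
        rw [hX] at h2gsr; linarith [h2gsr]
      rw [hγσ, mul_one] at h3
      linarith [hre, hQw.ge, hQw.le]
    -- chain
    have hpβ : p ≤ (p + q + D) / 2 := by linarith [hDge']
    have c1 : (1 - ε) * p ≤ (1 - ε) * ((p + q + D) / 2) :=
      mul_le_mul_of_nonneg_left hpβ (by linarith)
    have c2 : (1 - ε) * ((p + q + D) / 2) ≤ (1 + ε) * α := by
      rw [hα]; linarith [hF2]
    have c3 : (1 + ε) * α ≤ (1 + ε) * ‖T w‖ ^ 2 :=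
      mul_le_mul_of_nonneg_left hαQ (by linarith)
    calc (1 - ε) * ‖T z‖ ^ 2 = (1 - ε) * p := by rw [hp]
      _ ≤ (1 + ε) * ‖T w‖ ^ 2 := by linarith

lemma lb_bound (T : H →L[ℂ] H) (hT : T ≠ 0) {ε : ℝ} (hε0 : 0 ≤ ε) (hε1 : ε ≤ 1)
    (hA : IsAOP T ε) : (1 - ε) * ‖T‖ ^ 2 ≤ (1 + ε) * minMod T ^ 2 := by
  set m := minMod T with hm
  have hm0 : 0 ≤ m := minMod_nonneg T hT
  have h1ε : (0:ℝ) < 1 + ε := by linarith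
  have step1 : ∀ z : H, ‖z‖ = 1 → (1 - ε) * ‖T z‖ ^ 2 ≤ (1 + ε) * m ^ 2 := by
    intro z hz
    have hb : Real.sqrt ((1 - ε) / (1 + ε)) * ‖T z‖ ≤ m := by
      apply le_minMod T hT
      intro w hw
      have hpw := pointwise_bound T hε0 hε1 hA hz hw
      have h1 : (Real.sqrt ((1 - ε) / (1 + ε)) * ‖T z‖) ^ 2 ≤ ‖T w‖ ^ 2 := by
        rw [mul_pow, Real.sq_sqrt (div_nonneg (by linarith) h1ε.le),
          div_mul_eq_mul_div, div_le_iff₀ h1ε]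
        linarith [hpw]
      calc Real.sqrt ((1 - ε) / (1 + ε)) * ‖T z‖
          = Real.sqrt ((Real.sqrt ((1 - ε) / (1 + ε)) * ‖T z‖) ^ 2) :=
            (Real.sqrt_sq (by positivity)).symm
        _ ≤ Real.sqrt (‖T w‖ ^ 2) := Real.sqrt_le_sqrt h1
        _ = ‖T w‖ := Real.sqrt_sq (norm_nonneg _)
    have hb2 := pow_le_pow_left₀ (by positivity) hb 2
    rw [mul_pow, Real.sq_sqrt (div_nonneg (by linarith) h1ε.le),
      div_mul_eq_mul_div, div_le_iff₀ h1ε] at hb2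
    linarith [hb2]
  rcases eq_or_lt_of_le hε1 with hε1' | hε1'
  · rw [← hε1']
    norm_num
    positivity
  · have h1me : (0:ℝ) < 1 - ε := by linarith
    set C := Real.sqrt ((1 + ε) * m ^ 2 / (1 - ε)) with hC
    have hC0 : 0 ≤ C := Real.sqrt_nonneg _
    have hTC : ‖T‖ ≤ C := by
      apply ContinuousLinearMap.opNorm_le_bound _ hC0
      intro v
      by_cases hv : v = 0
      · simp [hv]
      · have hv0 : (0:ℝ) < ‖v‖ := norm_pos_iff.mpr hv
        have hv1 : ‖((‖v‖⁻¹ : ℝ) : ℂ) • v‖ = 1 := by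
          rw [norm_smul, Complex.norm_real, Real.norm_eq_abs,
            abs_of_pos (inv_pos.mpr hv0), inv_mul_cancel₀ hv0.ne']
        have hs1 := step1 _ hv1
        have hTv : ‖T (((‖v‖⁻¹ : ℝ) : ℂ) • v)‖ = ‖v‖⁻¹ * ‖T v‖ := by
          rw [map_smul, norm_smul, Complex.norm_real, Real.norm_eq_abs,
            abs_of_pos (inv_pos.mpr hv0)]
        rw [hTv] at hs1
        -- (1−ε) * (‖v‖⁻¹‖Tv‖)² ≤ (1+ε) m² → ‖Tv‖ ≤ C ‖v‖
        have hCsq : C ^ 2 = (1 + ε) * m ^ 2 / (1 - ε) := Real.sq_sqrt (by positivity)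
        have h2 : (‖v‖⁻¹ * ‖T v‖) ^ 2 ≤ C ^ 2 := by
          rw [hCsq, le_div_iff₀ h1me]
          linarith [hs1]
        have h3 : ‖v‖⁻¹ * ‖T v‖ ≤ C := by
          calc ‖v‖⁻¹ * ‖T v‖ = Real.sqrt ((‖v‖⁻¹ * ‖T v‖) ^ 2) :=
                (Real.sqrt_sq (by positivity)).symm
            _ ≤ Real.sqrt (C ^ 2) := Real.sqrt_le_sqrt h2
            _ = C := Real.sqrt_sq hC0
        calc ‖T v‖ = (‖v‖⁻¹ * ‖T v‖) * ‖v‖ := by field_simp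
          _ ≤ C * ‖v‖ := mul_le_mul_of_nonneg_right h3 hv0.le
    have h4 := pow_le_pow_left₀ (norm_nonneg T) hTC 2
    rw [Real.sq_sqrt (by positivity)] at h4
    rw [le_div_iff₀ h1me] at h4
    linarith [h4]

lemma isAOP_eps0 (T : H →L[ℂ] H) (hT : T ≠ 0) :
    IsAOP T ((‖T‖ ^ 2 - minMod T ^ 2) / (‖T‖ ^ 2 + minMod T ^ 2)) := by
  intro x y hxy
  set ε₀ := (‖T‖ ^ 2 - minMod T ^ 2) / (‖T‖ ^ 2 + minMod T ^ 2) with hε₀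
  have hM0 : 0 < ‖T‖ := norm_pos_iff.mpr hT
  have hm0 : 0 ≤ minMod T := minMod_nonneg T hT
  have hmM : minMod T ≤ ‖T‖ := minMod_le_opNorm T hT
  have hε00 : 0 ≤ ε₀ := by
    rw [hε₀]
    apply div_nonneg _ (by positivity)
    nlinarith
  by_cases hx0 : T x = 0
  · have h1 : ⟪T x, T y⟫ = 0 := by rw [hx0, inner_zero_left]
    rw [h1, norm_zero, hx0, norm_zero]
    simp
  by_cases hy0 : T y = 0
  · have h1 : ⟪T x, T y⟫ = 0 := by rw [hy0, inner_zero_right]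
    rw [h1, norm_zero, hy0, norm_zero]
    simp [mul_comm]
  have hx : x ≠ 0 := fun h => hx0 (by rw [h, map_zero])
  have hy : y ≠ 0 := fun h => hy0 (by rw [h, map_zero])
  have hxn : (0:ℝ) < ‖x‖ := norm_pos_iff.mpr hx
  have hyn : (0:ℝ) < ‖y‖ := norm_pos_iff.mpr hy
  set x' := ((‖x‖⁻¹ : ℝ) : ℂ) • x with hx'
  set y' := ((‖y‖⁻¹ : ℝ) : ℂ) • y with hy'
  have hx'1 : ‖x'‖ = 1 := by
    rw [hx', norm_smul, Complex.norm_real, Real.norm_eq_abs,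
      abs_of_pos (inv_pos.mpr hxn), inv_mul_cancel₀ hxn.ne']
  have hy'1 : ‖y'‖ = 1 := by
    rw [hy', norm_smul, Complex.norm_real, Real.norm_eq_abs,
      abs_of_pos (inv_pos.mpr hyn), inv_mul_cancel₀ hyn.ne']
  have hxy' : ⟪x', y'⟫ = 0 := by
    rw [hx', hy', inner_smul_left, inner_smul_right, hxy, mul_zero, mul_zero]
  have key := aop_unit T hT hx'1 hy'1 hxy'
  have hTx' : ‖T x'‖ = ‖x‖⁻¹ * ‖T x‖ := by
    rw [hx', map_smul, norm_smul, Complex.norm_real, Real.norm_eq_abs,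
      abs_of_pos (inv_pos.mpr hxn)]
  have hTy' : ‖T y'‖ = ‖y‖⁻¹ * ‖T y‖ := by
    rw [hy', map_smul, norm_smul, Complex.norm_real, Real.norm_eq_abs,
      abs_of_pos (inv_pos.mpr hyn)]
  have hIx' : ‖⟪T x', T y'⟫‖ = ‖x‖⁻¹ * ‖y‖⁻¹ * ‖⟪T x, T y⟫‖ := by
    rw [hx', hy', map_smul, map_smul, inner_smul_left, inner_smul_right,
      Complex.conj_ofReal, norm_mul, norm_mul, Complex.norm_real,
      Complex.norm_real, Real.norm_eq_abs, Real.norm_eq_abs,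
      abs_of_pos (inv_pos.mpr hxn), abs_of_pos (inv_pos.mpr hyn), mul_assoc]
  rw [hIx', hTx', hTy'] at key
  have hmul := mul_le_mul_of_nonneg_left key (mul_pos hxn hyn).le
  calc ‖⟪T x, T y⟫‖ = (‖x‖ * ‖y‖) * (‖x‖⁻¹ * ‖y‖⁻¹ * ‖⟪T x, T y⟫‖) := by
        field_simp
    _ ≤ (‖x‖ * ‖y‖) * (ε₀ * (‖x‖⁻¹ * ‖T x‖ * (‖y‖⁻¹ * ‖T y‖))) := hmul
    _ = ε₀ * (‖T x‖ * ‖T y‖) := by field_simp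

end AuxAOP

/-- `m(T) = √((1 − ε̂(T))/(1 + ε̂(T))) ‖T‖` for nonzero `T`. -/
theorem minMod_eq (hdim : 2 ≤ Module.rank ℂ H) (T : H →L[ℂ] H) (hT : T ≠ 0) :
    minMod T = Real.sqrt ((1 - epsHat T) / (1 + epsHat T)) * ‖T‖ := by
  set M := ‖T‖ with hM
  set m := minMod T with hm
  have hM0 : 0 < M := norm_pos_iff.mpr hT
  have hm0 : 0 ≤ m := minMod_nonneg T hT
  have hmM : m ≤ M := minMod_le_opNorm T hT
  have hden : (0:ℝ) < M ^ 2 + m ^ 2 := by positivity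
  set ε₀ := (M ^ 2 - m ^ 2) / (M ^ 2 + m ^ 2) with hε₀
  have hε00 : 0 ≤ ε₀ := by
    rw [hε₀]; apply div_nonneg _ hden.le; nlinarith
  have hε01 : ε₀ ≤ 1 := by
    rw [hε₀, div_le_one hden]; nlinarith
  have hmem : ε₀ ∈ {ε : ℝ | 0 ≤ ε ∧ ε ≤ 1 ∧ IsAOP T ε} :=
    ⟨hε00, hε01, isAOP_eps0 T hT⟩
  have hlow : ∀ ε ∈ {ε : ℝ | 0 ≤ ε ∧ ε ≤ 1 ∧ IsAOP T ε}, ε₀ ≤ ε := by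
    rintro ε ⟨he0, he1, heA⟩
    have hlb := lb_bound T hT he0 he1 heA
    rw [hε₀, div_le_iff₀ hden]
    nlinarith [hlb]
  have heps : epsHat T = ε₀ := by
    apply le_antisymm
    · exact csInf_le ⟨0, fun e he => he.1⟩ hmem
    · exact le_csInf ⟨ε₀, hmem⟩ hlow
  rw [heps]
  have h1 : (1 - ε₀) / (1 + ε₀) = m ^ 2 / M ^ 2 := by
    rw [hε₀]
    rw [div_eq_div_iff (by positivity) (by positivity)]
    field_simp
    ring
  rw [h1]
  have h2 : m ^ 2 / M ^ 2 = (m / M) ^ 2 := by ring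
  rw [h2, Real.sqrt_sq (by positivity), div_mul_cancel₀ _ hM0.ne']
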